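/- For every k ∈ ℤ, the proportion of Lipschitz functions with zero boundary condition on 𝕋_d^n whose value at the root is k equals the k-th coordinate of the n-fold iterate of F applied to δ_0; that is, |{h ∈ L_n : h(ρ) = k}| / |L_n| = F^{(n)}(δ_0)_k. -/

import Mathlib

open Filter Topology

/-- Vertices of the `d`-ary tree of height `n`: strings over `{0,…,d-1}` of length `≤ n`. -/
def TreeVert (d n : ℕ) := {l : List (Fin d) // l.length ≤ n}

/-- The child `s·i` of a vertex `s` of length `< n`. -/
def childVert {d n : ℕ} (s : TreeVert d n) (hs : s.val.length < n) (i : Fin d) :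
    TreeVert d n :=
  ⟨s.val ++ [i], by simp; omega⟩

/-- Lipschitz functions with zero boundary conditions on the `d`-ary tree of height `n`. -/
def LipTree (d n : ℕ) : Set (TreeVert d n → ℤ) :=
  {h | (∀ (s : TreeVert d n) (hs : s.val.length < n) (i : Fin d),
          |h s - h (childVert s hs i)| ≤ 1) ∧
        ∀ s : TreeVert d n, s.val.length = n → h s = 0}

/-- The root (empty string). -/
def rootVert (d n : ℕ) : TreeVert d n := ⟨[], by simp⟩

noncomputable def Aop (d : ℕ) (z : ℤ → ℝ) : ℤ → ℝ :=
  fun i => (z (i - 1) + z i + z (i + 1)) ^ d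

noncomputable def Fop (d : ℕ) (z : ℤ → ℝ) : ℤ → ℝ :=
  fun i => Aop d z i / ∑' j : ℤ, Aop d z j

noncomputable def delta0 : ℤ → ℝ := fun i => if i = 0 then 1 else 0

-- glue: reconstruct a function on height n+1 from root value and subtree functions
def glueAux {d n : ℕ} (k : ℤ) (g : Fin d → (TreeVert d n → ℤ)) : List (Fin d) → ℤ
  | [] => k
  | i :: s => if hs : s.length ≤ n then g i ⟨s, hs⟩ else 0

noncomputable def stepEquiv (d n : ℕ) (k : ℤ) :
    {h : TreeVert d (n+1) → ℤ // h ∈ LipTree d (n+1) ∧ h (rootVert d (n+1)) = k} ≃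
    (Fin d → {h : TreeVert d n → ℤ // h ∈ LipTree d n ∧ |h (rootVert d n) - k| ≤ 1}) where
  toFun h i := ⟨fun s => h.val ⟨i :: s.val, by simpa using Nat.succ_le_succ s.prop⟩, by
    obtain ⟨h, ⟨hlip, hbd⟩, hroot⟩ := h
    refine ⟨⟨?_, ?_⟩, ?_⟩
    · intro s hs i'
      have := hlip ⟨i :: s.val, by simpa using Nat.succ_le_succ s.prop⟩ (by simpa using hs) i'
      convert this using 3
      rfl
    · intro s hsl
      exact hbd ⟨i :: s.val, by simp [hsl]⟩ (by simp [hsl])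
    · have := hlip (rootVert d (n+1)) (by simp [rootVert]) i
      rw [hroot] at this
      rw [abs_sub_comm]
      convert this using 3
      rfl⟩
  invFun g := ⟨fun v => glueAux k (fun i => (g i).val) v.val, by
    refine ⟨⟨?_, ?_⟩, rfl⟩
    · rintro ⟨l, hl⟩ hs i'
      match l with
      | [] =>
        show |k - glueAux k _ ([] ++ [i'])| ≤ 1
        have := (g i').prop.2
        simp only [glueAux, List.nil_append]
        rw [dif_pos (by simp)]
        rw [abs_sub_comm]
        simpa [rootVert] using this
      | j :: s =>
        show |glueAux k _ (j :: s) - glueAux k _ ((j :: s) ++ [i'])| ≤ 1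
        have hsn : s.length ≤ n := by simp at hs; omega
        have hsn' : s.length < n := by simp at hs; omega
        simp only [glueAux, List.cons_append]
        rw [dif_pos hsn, dif_pos (by simp; omega)]
        have := (g j).prop.1.1 ⟨s, hsn⟩ hsn' i'
        convert this using 3
        rfl
    · rintro ⟨l, hl⟩ hlen
      match l with
      | [] => simp at hlen
      | j :: s =>
        show glueAux k _ (j :: s) = 0
        have hsn : s.length = n := by simpa using hlen
        simp only [glueAux]
        rw [dif_pos (le_of_eq hsn)]
        exact (g j).prop.1.2 ⟨s, le_of_eq hsn⟩ hsn⟩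
  left_inv h := by
    apply Subtype.ext
    funext v
    obtain ⟨l, hl⟩ := v
    dsimp only
    match l with
    | [] => exact h.prop.2.symm
    | j :: s =>
      have hs : s.length ≤ n := by simpa using hl
      simp only [glueAux, dif_pos hs]
  right_inv g := by
    funext i
    apply Subtype.ext
    funext s
    obtain ⟨sv, sp⟩ := s
    show glueAux k (fun i => (g i).val) (i :: sv) = (g i).val ⟨sv, sp⟩
    simp only [glueAux]
    rw [dif_pos sp]

noncomputable def threeEquiv (d n : ℕ) (k : ℤ) :
    {h : TreeVert d n → ℤ // h ∈ LipTree d n ∧ |h (rootVert d n) - k| ≤ 1} ≃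
    ({h : TreeVert d n → ℤ // h ∈ LipTree d n ∧ h (rootVert d n) = k - 1} ⊕
     ({h : TreeVert d n → ℤ // h ∈ LipTree d n ∧ h (rootVert d n) = k} ⊕
      {h : TreeVert d n → ℤ // h ∈ LipTree d n ∧ h (rootVert d n) = k + 1})) := by
  classical
  refine (Equiv.subtypeEquivRight (q := fun h => (h ∈ LipTree d n ∧ h (rootVert d n) = k - 1) ∨
      ((h ∈ LipTree d n ∧ h (rootVert d n) = k) ∨ (h ∈ LipTree d n ∧ h (rootVert d n) = k + 1)))
      (fun h => by
        constructor
        · rintro ⟨h1, h2⟩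
          rw [abs_le] at h2
          have : h (rootVert d n) = k-1 ∨ h (rootVert d n) = k ∨ h (rootVert d n) = k+1 := by
            omega
          rcases this with h3|h3|h3
          exacts [Or.inl ⟨h1,h3⟩, Or.inr (Or.inl ⟨h1,h3⟩), Or.inr (Or.inr ⟨h1,h3⟩)]
        · rintro (⟨h1,h2⟩|⟨h1,h2⟩|⟨h1,h2⟩) <;> exact ⟨h1, by rw [abs_le]; omega⟩)).trans ?_
  refine (subtypeOrEquiv _ _ ?_).trans (Equiv.sumCongr (Equiv.refl _)
    (subtypeOrEquiv _ _ ?_)) <;>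
  · rw [Pi.disjoint_iff]
    intro h
    rw [Prop.disjoint_iff]
    rintro ⟨⟨-, e1⟩, hq⟩
    first
    | (rcases hq with ⟨-, e2⟩|⟨-, e2⟩ <;> omega)
    | (obtain ⟨-, e2⟩ := hq; omega)

/-- Number of Lipschitz functions with root value `k`. -/
noncomputable def cnt (d n : ℕ) (k : ℤ) : ℕ :=
  Nat.card {h : TreeVert d n → ℤ // h ∈ LipTree d n ∧ h (rootVert d n) = k}

instance fibFinite (d n : ℕ) (k : ℤ) :
    Finite {h : TreeVert d n → ℤ // h ∈ LipTree d n ∧ h (rootVert d n) = k} := by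
  induction n generalizing k with
  | zero =>
    have : Subsingleton {h : TreeVert d 0 → ℤ // h ∈ LipTree d 0 ∧ h (rootVert d 0) = k} := by
      constructor
      rintro ⟨h1, ⟨⟨-, hb1⟩, -⟩⟩ ⟨h2, ⟨⟨-, hb2⟩, -⟩⟩
      apply Subtype.ext
      funext s
      show h1 s = h2 s
      rw [hb1 s (Nat.le_zero.mp s.prop), hb2 s (Nat.le_zero.mp s.prop)]
    infer_instance
  | succ n ih =>
    have : ∀ j : ℤ, Finite {h : TreeVert d n → ℤ // h ∈ LipTree d n ∧
        |h (rootVert d n) - j| ≤ 1} := fun j => Finite.of_equiv _ (threeEquiv d n j).symm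
    exact Finite.of_equiv _ (stepEquiv d n k).symm

lemma cnt_zero (d : ℕ) (k : ℤ) : cnt d 0 k = if k = 0 then 1 else 0 := by
  split
  · subst ‹k = 0›
    rw [cnt, Nat.card_eq_one_iff_unique]
    constructor
    · constructor
      rintro ⟨h1, ⟨⟨-, hb1⟩, -⟩⟩ ⟨h2, ⟨⟨-, hb2⟩, -⟩⟩
      apply Subtype.ext
      funext s
      show h1 s = h2 s
      rw [hb1 s (Nat.le_zero.mp s.prop), hb2 s (Nat.le_zero.mp s.prop)]
    · exact ⟨⟨fun _ => 0, ⟨fun s hs => by omega, fun _ _ => rfl⟩, rfl⟩⟩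
  · rw [cnt, Nat.card_eq_zero]
    left
    constructor
    rintro ⟨h, ⟨⟨-, hb⟩, hr⟩⟩
    exact ‹¬ k = 0› (by rw [← hr]; exact hb _ rfl)

lemma cnt_succ (d n : ℕ) (k : ℤ) :
    cnt d (n+1) k = (cnt d n (k-1) + cnt d n k + cnt d n (k+1)) ^ d := by
  rw [cnt, Nat.card_congr (stepEquiv d n k), Nat.card_fun, Nat.card_eq_fintype_card (α := Fin d),
    Fintype.card_fin, Nat.card_congr (threeEquiv d n k), Nat.card_sum, Nat.card_sum]
  rw [cnt, cnt, cnt]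
  ring

lemma cnt_pos (d n : ℕ) (hd : 1 ≤ d) : 1 ≤ cnt d n 0 := by
  induction n with
  | zero => simp [cnt_zero]
  | succ n ih =>
    rw [cnt_succ]
    calc 1 = 1 ^ d := (one_pow d).symm
    _ ≤ _ := Nat.pow_le_pow_left (by omega) d

lemma cnt_eq_zero (d n : ℕ) (hd : 1 ≤ d) (k : ℤ) (hk : n < |k|) : cnt d n k = 0 := by
  induction n generalizing k with
  | zero =>
    rw [cnt_zero, if_neg]
    intro h
    rw [h] at hk
    simp at hk
  | succ n ih =>
    rw [lt_abs] at hk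
    push_cast at hk
    rw [cnt_succ, ih (k-1) (by rw [lt_abs]; omega), ih k (by rw [lt_abs]; omega),
      ih (k+1) (by rw [lt_abs]; omega)]
    exact Nat.zero_pow (by omega)

lemma root_bound (d n : ℕ) (hd : 1 ≤ d) (h : TreeVert d n → ℤ) (hh : h ∈ LipTree d n) :
    |h (rootVert d n)| ≤ n := by
  induction n with
  | zero => rw [hh.2 (rootVert d 0) rfl]; simp
  | succ n ih =>
    have i0 : Fin d := ⟨0, by omega⟩
    have g := stepEquiv d n (h (rootVert d (n+1))) ⟨h, hh, rfl⟩
    have h2 := (g i0).prop.2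
    have h3 := ih _ (g i0).prop.1
    have t1 : |h (rootVert d (n+1))| ≤ |(g i0).val (rootVert d n)| +
        |h (rootVert d (n+1)) - (g i0).val (rootVert d n)| := by
      calc |h (rootVert d (n+1))| = |(g i0).val (rootVert d n) +
          (h (rootVert d (n+1)) - (g i0).val (rootVert d n))| := by ring_nf
      _ ≤ _ := abs_add_le _ _
    have t2 : |h (rootVert d (n+1)) - (g i0).val (rootVert d n)| ≤ 1 := by
      rw [abs_sub_comm]; exact h2
    push_cast
    linarith

noncomputable def totalEquiv (d n : ℕ) (hd : 1 ≤ d) :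
    {h : TreeVert d n → ℤ // h ∈ LipTree d n} ≃
    (Σ k : Finset.Icc (-(n:ℤ)) (n:ℤ),
      {h : TreeVert d n → ℤ // h ∈ LipTree d n ∧ h (rootVert d n) = k}) where
  toFun h := ⟨⟨h.val (rootVert d n), by
      rw [Finset.mem_Icc]
      have := root_bound d n hd h.val h.prop
      rw [abs_le] at this
      exact this⟩,
    ⟨h.val, h.prop, rfl⟩⟩
  invFun p := ⟨p.2.val, p.2.prop.1⟩
  left_inv h := rfl
  right_inv p := by
    obtain ⟨⟨k, hk⟩, ⟨h, hh, he⟩⟩ := p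
    rw [show ((⟨k, hk⟩ : Finset.Icc (-(n:ℤ)) (n:ℤ)) : ℤ) = k from rfl] at he
    subst he
    rfl

lemma total_card (d n : ℕ) (hd : 1 ≤ d) :
    Nat.card {h : TreeVert d n → ℤ // h ∈ LipTree d n} =
    ∑ k ∈ Finset.Icc (-(n:ℤ)) (n:ℤ), cnt d n k := by
  rw [Nat.card_congr (totalEquiv d n hd)]
  letI : ∀ k : Finset.Icc (-(n:ℤ)) (n:ℤ),
      Fintype {h : TreeVert d n → ℤ // h ∈ LipTree d n ∧ h (rootVert d n) = k} :=
    fun k => Fintype.ofFinite _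
  rw [Nat.card_eq_fintype_card, Fintype.card_sigma,
    ← Finset.sum_attach (Finset.Icc (-(n:ℤ)) (n:ℤ)) (fun k => cnt d n k)]
  exact Finset.sum_congr rfl fun k _ => (Nat.card_eq_fintype_card (α := _)).symm

noncomputable def Z (d n : ℕ) : ℤ → ℝ := fun k => cnt d n k

lemma Z_nonneg (d n : ℕ) (k : ℤ) : 0 ≤ Z d n k := Nat.cast_nonneg _

lemma Z_sum (d n : ℕ) (hd : 1 ≤ d) :
    ∑' k : ℤ, Z d n k = ∑ k ∈ Finset.Icc (-(n:ℤ)) (n:ℤ), Z d n k := by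
  apply tsum_eq_sum
  intro k hk
  rw [Finset.mem_Icc] at hk
  push_neg at hk
  have : (n:ℤ) < |k| := by rw [lt_abs]; omega
  simp [Z, cnt_eq_zero d n hd k this]

lemma Aop_Z (d n : ℕ) : Aop d (Z d n) = Z d (n+1) := by
  funext k
  simp only [Aop, Z, cnt_succ]
  push_cast
  ring

lemma S_pos (d n : ℕ) (hd : 1 ≤ d) : 0 < ∑' k : ℤ, Z d n k := by
  rw [Z_sum d n hd]
  have h0 : (0:ℝ) < Z d n 0 := by
    have := cnt_pos d n hd
    simp only [Z]
    exact_mod_cast Nat.lt_of_lt_of_le Nat.zero_lt_one this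
  refine lt_of_lt_of_le h0 (Finset.single_le_sum (fun i _ => Z_nonneg d n i) ?_)
  rw [Finset.mem_Icc]
  omega

lemma key (d n : ℕ) (hd : 1 ≤ d) :
    (Fop d)^[n] delta0 = fun k => Z d n k / ∑' j : ℤ, Z d n j := by
  induction n with
  | zero =>
    have hz : Z d 0 = fun k => if k = 0 then (1:ℝ) else 0 := by
      funext j
      simp only [Z, cnt_zero]
      split <;> simp
    rw [Function.iterate_zero, id_eq, hz, tsum_ite_eq (0:ℤ) (fun _ => (1:ℝ))]
    funext k
    simp [delta0]
  | succ n ih =>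
    rw [Function.iterate_succ_apply', ih]
    funext k
    have hSpos := S_pos d n hd
    set S := ∑' j : ℤ, Z d n j with hS
    have hzd : ((S⁻¹)^d : ℝ) ≠ 0 := by positivity
    have hA : ∀ i, Aop d (fun j => Z d n j / S) i = (S⁻¹)^d * Aop d (Z d n) i := by
      intro i
      have e : (Z d n (i-1)/S + Z d n i/S + Z d n (i+1)/S) =
          (Z d n (i-1) + Z d n i + Z d n (i+1)) * S⁻¹ := by ring
      show (Z d n (i-1)/S + Z d n i/S + Z d n (i+1)/S) ^ d = _
      rw [e, mul_pow, Aop]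
      ring
    simp only [Fop, hA]
    rw [tsum_mul_left, mul_div_mul_left _ _ hzd, Aop_Z]

theorem stmt_2 (d n : ℕ) (hd : 2 ≤ d) (k : ℤ) :
    (Nat.card {h : TreeVert d n → ℤ // h ∈ LipTree d n ∧ h (rootVert d n) = k} : ℝ) /
      (Nat.card {h : TreeVert d n → ℤ // h ∈ LipTree d n} : ℝ) =
      (Fop d)^[n] delta0 k := by
  have hd1 : 1 ≤ d := by omega
  rw [key d n hd1, Z_sum d n hd1, total_card d n hd1]
  show (cnt d n k : ℝ) / _ = Z d n k / _
  rw [Nat.cast_sum]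
  rfl
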